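/- arXiv:2006.06428 — 4 statements merged into one kernel-verified Lean document; each statement's English description precedes it below -/
import Mathlib

section
/- Let a(x,y) be the affine-parametric coefficient with truncation a_r(x,y), and let the bilinear forms A and A_r be the weighted Dirichlet forms with coefficients a and a_r respectively. Under assumptions 0 < a0min ≤ a0 ≤ a0max and τ < 1, the forms A and A_r are equivalent: for all v ∈ V, θ_r A_r(v,v) ≤ A(v,v) ≤ Θ_r A_r(v,v), where θ_r = (1−τ)a0min / (a0max + a0min·τ_r) and Θ_r = (a0max + a0min·τ) / ((1−τ_r)a0min). -/
open MeasureTheory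

private lemma prod_apply_le_gen {α β : Type*} [MeasurableSpace α] [MeasurableSpace β]
    (μ : Measure α) (ν : Measure β) {A : Set (α × β)} (hA : MeasurableSet A) :
    μ.prod ν A ≤ ∫⁻ x, ν (Prod.mk x ⁻¹' A) ∂μ := by
  rw [Measure.prod]
  by_cases h : AEMeasurable (fun x => ν.map (Prod.mk x)) μ
  · rw [Measure.bind, Measure.join_apply hA,
      lintegral_map' (Measure.measurable_coe hA).aemeasurable h]
    refine le_of_eq (lintegral_congr fun x => ?_)
    exact Measure.map_apply measurable_prodMk_left hA
  · rw [Measure.bind, Measure.map_of_not_aemeasurable h]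
    simp

private lemma ae_prod_of_ae_ae {α β : Type*} [MeasurableSpace α] [MeasurableSpace β]
    {μ : Measure α} {ν : Measure β} {p : α → Prop} {q : β → Prop}
    (hp : ∀ᵐ x ∂μ, p x) (hq : ∀ᵐ y ∂ν, q y) :
    ∀ᵐ z ∂μ.prod ν, p z.1 ∧ q z.2 := by
  have hS0 : μ (toMeasurable μ {x | ¬ p x}) = 0 := by
    rw [measure_toMeasurable]; exact hp
  have hT0 : ν (toMeasurable ν {y | ¬ q y}) = 0 := by
    rw [measure_toMeasurable]; exact hq
  have hSm : MeasurableSet (toMeasurable μ {x | ¬ p x}) := measurableSet_toMeasurable _ _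
  have hTm : MeasurableSet (toMeasurable ν {y | ¬ q y}) := measurableSet_toMeasurable _ _
  have hsub : {z : α × β | ¬ (p z.1 ∧ q z.2)} ⊆
      ((toMeasurable μ {x | ¬ p x})ᶜ ×ˢ (toMeasurable ν {y | ¬ q y})ᶜ)ᶜ := by
    intro z hz
    simp only [Set.mem_compl_iff, Set.mem_prod, not_and_or]
    by_contra hcon
    push_neg at hcon
    obtain ⟨h1, h2⟩ := hcon
    have hp1 : p z.1 := by
      by_contra hnp
      exact h1 (subset_toMeasurable μ _ hnp)
    have hq1 : q z.2 := by
      by_contra hnq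
      exact h2 (subset_toMeasurable ν _ hnq)
    exact hz ⟨hp1, hq1⟩
  refine measure_mono_null hsub ?_
  rw [Set.compl_prod_eq_union, compl_compl, compl_compl]
  refine measure_union_null ?_ ?_
  · refine le_antisymm
      (le_trans (prod_apply_le_gen μ ν (hSm.prod MeasurableSet.univ)) ?_) zero_le
    have hae : ∀ᵐ x ∂μ, x ∉ toMeasurable μ {x | ¬ p x} := by
      rw [ae_iff]; simpa using hS0
    have hzero : (fun x => ν (Prod.mk x ⁻¹' (toMeasurable μ {x | ¬ p x} ×ˢ
        (Set.univ : Set β)))) =ᵐ[μ] 0 := by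
      filter_upwards [hae] with x hx
      have hpre : Prod.mk x ⁻¹' (toMeasurable μ {x | ¬ p x} ×ˢ (Set.univ : Set β)) = ∅ := by
        ext y; simp [hx]
      simp [hpre]
    rw [lintegral_congr_ae hzero]
    simp
  · refine le_antisymm
      (le_trans (prod_apply_le_gen μ ν (MeasurableSet.univ.prod hTm)) ?_) zero_le
    have hzero : ∀ x, ν (Prod.mk x ⁻¹' ((Set.univ : Set α) ×ˢ
        toMeasurable ν {y | ¬ q y})) = 0 := by
      intro x
      have hpre : Prod.mk x ⁻¹' ((Set.univ : Set α) ×ˢ toMeasurable ν {y | ¬ q y}) =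
          toMeasurable ν {y | ¬ q y} := by
        ext y; simp
      rw [hpre]; exact hT0
    simp only [hzero, lintegral_zero, le_refl]

/-- Equivalence of the weighted Dirichlet forms `A` (with the full affine-parametric
coefficient `a(x,y) = a0(x) + Σ_{m=1}^∞ a_m(x) y_m`) and `A_r` (with the `r`-term
truncation), with constants `θ_r = (1-τ)a0min/(a0max + a0min τ_r)` and
`Θ_r = (a0max + a0min τ)/((1-τ_r)a0min)`.  Here `b m` plays the role of `a_{m+1}`,
`Y y m` is the `m`-th coordinate of the parameter `y ∈ Γ = [-1,1]^ℕ` and `G`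
represents the spatial gradient of an element `v ∈ V`, so `‖G z‖² = |∇v(x,y)|²`. -/
theorem truncated_form_equivalent
    {Ω Γ : Type*} [MeasurableSpace Ω] [MeasurableSpace Γ]
    (μ : Measure Ω) (ν : Measure Γ) {d : ℕ} (r : ℕ)
    (p : Γ → ℝ) (hp : ∀ y, 0 ≤ p y)
    (Y : Γ → ℕ → ℝ) (hY : ∀ᵐ y ∂ν, ∀ m, |Y y m| ≤ 1)
    (a0 : Ω → ℝ) (b : ℕ → Ω → ℝ) (a0min a0max τ τr : ℝ)
    (ha0min : 0 < a0min)
    (ha0 : ∀ᵐ x ∂μ, a0min ≤ a0 x ∧ a0 x ≤ a0max)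
    (hsum : ∀ x, Summable fun m => |b m x|)
    (hτ : ∀ᵐ x ∂μ, (∑' m, |b m x|) ≤ a0min * τ)
    (hτr : ∀ᵐ x ∂μ, (∑ m ∈ Finset.range r, |b m x|) ≤ a0min * τr)
    (hτ1 : τ < 1) (hτr0 : 0 ≤ τr) (hτrτ : τr ≤ τ)
    (G : Ω × Γ → EuclideanSpace ℝ (Fin d))
    (hIA : Integrable
      (fun z => p z.2 * ((a0 z.1 + ∑' m, b m z.1 * Y z.2 m) * ‖G z‖ ^ 2)) (μ.prod ν))
    (hIAr : Integrable
      (fun z => p z.2 * ((a0 z.1 + ∑ m ∈ Finset.range r, b m z.1 * Y z.2 m) * ‖G z‖ ^ 2))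
      (μ.prod ν)) :
    ((1 - τ) * a0min / (a0max + a0min * τr)) *
        ∫ z, p z.2 * ((a0 z.1 + ∑ m ∈ Finset.range r, b m z.1 * Y z.2 m) * ‖G z‖ ^ 2)
          ∂(μ.prod ν)
      ≤ ∫ z, p z.2 * ((a0 z.1 + ∑' m, b m z.1 * Y z.2 m) * ‖G z‖ ^ 2) ∂(μ.prod ν) ∧
    ∫ z, p z.2 * ((a0 z.1 + ∑' m, b m z.1 * Y z.2 m) * ‖G z‖ ^ 2) ∂(μ.prod ν)
      ≤ ((a0max + a0min * τ) / ((1 - τr) * a0min)) *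
        ∫ z, p z.2 * ((a0 z.1 + ∑ m ∈ Finset.range r, b m z.1 * Y z.2 m) * ‖G z‖ ^ 2)
          ∂(μ.prod ν) := by
  set θ : ℝ := (1 - τ) * a0min / (a0max + a0min * τr) with hθ_def
  set Θ : ℝ := (a0max + a0min * τ) / ((1 - τr) * a0min) with hΘ_def
  by_cases hminmax : a0min ≤ a0max
  case neg =>
    -- then μ = 0, hence μ.prod ν = 0 and all integrals vanish
    have hμ : μ = 0 := by
      have : ∀ᵐ x ∂μ, False := by
        filter_upwards [ha0] with x ⟨h1, h2⟩
        exact hminmax (h1.trans h2)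
      simpa [ae_iff] using this
    have hprod : μ.prod ν = 0 := by
      rw [hμ, Measure.prod]
      simp [Measure.bind]
    rw [hprod]
    simp
  -- main case
  have hτ0 : 0 ≤ τ := by
    -- from existence of a point? Not directly; but τr ≤ τ and 0 ≤ τr
    exact hτr0.trans hτrτ
  have hτr1 : τr < 1 := lt_of_le_of_lt hτrτ hτ1
  have hden1 : 0 < a0max + a0min * τr := by
    have : 0 < a0max := lt_of_lt_of_le ha0min hminmax
    positivity
  have hden2 : 0 < (1 - τr) * a0min := by
    have : 0 < 1 - τr := by linarith
    positivity
  have hθ0 : 0 ≤ θ := by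
    rw [hθ_def]
    apply div_nonneg _ hden1.le
    nlinarith
  have hΘ0 : 0 ≤ Θ := by
    rw [hΘ_def]
    apply div_nonneg _ hden2.le
    nlinarith [lt_of_lt_of_le ha0min hminmax]
  -- a.e. pointwise bounds
  have hae : ∀ᵐ z ∂μ.prod ν,
      θ * (p z.2 * ((a0 z.1 + ∑ m ∈ Finset.range r, b m z.1 * Y z.2 m) * ‖G z‖ ^ 2))
        ≤ p z.2 * ((a0 z.1 + ∑' m, b m z.1 * Y z.2 m) * ‖G z‖ ^ 2) ∧
      p z.2 * ((a0 z.1 + ∑' m, b m z.1 * Y z.2 m) * ‖G z‖ ^ 2)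
        ≤ Θ * (p z.2 * ((a0 z.1 + ∑ m ∈ Finset.range r, b m z.1 * Y z.2 m) * ‖G z‖ ^ 2)) := by
    have hkey := ae_prod_of_ae_ae (μ := μ) (ν := ν) ((ha0.and hτ).and hτr) hY
    filter_upwards [hkey] with z hz
    obtain ⟨⟨⟨⟨h1, h2⟩, h3⟩, h4⟩, h5⟩ := hz
    set x := z.1
    set y := z.2
    -- bounds on the series
    have hsummul : Summable fun m => b m x * Y y m := by
      apply Summable.of_abs
      apply (hsum x).of_nonneg_of_le (fun m => abs_nonneg _)
      intro m
      rw [abs_mul]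
      calc |b m x| * |Y y m| ≤ |b m x| * 1 :=
            mul_le_mul_of_nonneg_left (h5 m) (abs_nonneg _)
        _ = |b m x| := mul_one _
    have htsum_bound : |∑' m, b m x * Y y m| ≤ a0min * τ := by
      calc |∑' m, b m x * Y y m| ≤ ∑' m, |b m x * Y y m| := by
            rw [← Real.norm_eq_abs]
            refine le_trans (norm_tsum_le_tsum_norm ?_) (le_of_eq ?_)
            · simpa only [Real.norm_eq_abs] using hsummul.abs
            · simp only [Real.norm_eq_abs]
        _ ≤ ∑' m, |b m x| := by
            apply Summable.tsum_le_tsum _ hsummul.abs (hsum x)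
            intro m
            rw [abs_mul]
            calc |b m x| * |Y y m| ≤ |b m x| * 1 :=
                  mul_le_mul_of_nonneg_left (h5 m) (abs_nonneg _)
              _ = |b m x| := mul_one _
        _ ≤ a0min * τ := h3
    have hfin_bound : |∑ m ∈ Finset.range r, b m x * Y y m| ≤ a0min * τr := by
      calc |∑ m ∈ Finset.range r, b m x * Y y m|
          ≤ ∑ m ∈ Finset.range r, |b m x * Y y m| := Finset.abs_sum_le_sum_abs _ _
        _ ≤ ∑ m ∈ Finset.range r, |b m x| := by
            apply Finset.sum_le_sum
            intro m _
            rw [abs_mul]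
            calc |b m x| * |Y y m| ≤ |b m x| * 1 :=
                  mul_le_mul_of_nonneg_left (h5 m) (abs_nonneg _)
              _ = |b m x| := mul_one _
        _ ≤ a0min * τr := h4
    set A : ℝ := a0 x + ∑' m, b m x * Y y m
    set Ar : ℝ := a0 x + ∑ m ∈ Finset.range r, b m x * Y y m
    have habs1 := abs_le.mp htsum_bound
    have habs2 := abs_le.mp hfin_bound
    have hA_lb : (1 - τ) * a0min ≤ A := by
      have : a0min - a0min * τ ≤ A := by
        simp only [A]; linarith [habs1.1]
      linarith [this]
    have hA_ub : A ≤ a0max + a0min * τ := by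
      simp only [A]; linarith [habs1.2]
    have hAr_lb : (1 - τr) * a0min ≤ Ar := by
      have : a0min - a0min * τr ≤ Ar := by
        simp only [Ar]; linarith [habs2.1]
      linarith [this]
    have hAr_ub : Ar ≤ a0max + a0min * τr := by
      simp only [Ar]; linarith [habs2.2]
    have hg : (0:ℝ) ≤ ‖G z‖ ^ 2 := by positivity
    have hpz : 0 ≤ p y := hp y
    constructor
    · -- θ * (p * (Ar * g)) ≤ p * (A * g)
      have h1' : θ * Ar ≤ A := by
        calc θ * Ar ≤ θ * (a0max + a0min * τr) :=
              mul_le_mul_of_nonneg_left hAr_ub hθ0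
          _ = (1 - τ) * a0min := by
              rw [hθ_def, div_mul_cancel₀ _ hden1.ne']
          _ ≤ A := hA_lb
      calc θ * (p y * (Ar * ‖G z‖ ^ 2)) = p y * ((θ * Ar) * ‖G z‖ ^ 2) := by ring
        _ ≤ p y * (A * ‖G z‖ ^ 2) := by
            apply mul_le_mul_of_nonneg_left _ hpz
            exact mul_le_mul_of_nonneg_right h1' hg
    · -- p * (A * g) ≤ Θ * (p * (Ar * g))
      have h2' : A ≤ Θ * Ar := by
        calc A ≤ a0max + a0min * τ := hA_ub
          _ = Θ * ((1 - τr) * a0min) := by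
              rw [hΘ_def, div_mul_cancel₀ _ hden2.ne']
          _ ≤ Θ * Ar := mul_le_mul_of_nonneg_left hAr_lb hΘ0
      calc p y * (A * ‖G z‖ ^ 2) ≤ p y * ((Θ * Ar) * ‖G z‖ ^ 2) := by
            apply mul_le_mul_of_nonneg_left _ hpz
            exact mul_le_mul_of_nonneg_right h2' hg
        _ = Θ * (p y * (Ar * ‖G z‖ ^ 2)) := by ring
  constructor
  · rw [← integral_const_mul]
    exact integral_mono_ae (hIAr.const_mul θ) hIA (hae.mono fun z h => h.1)
  · rw [← integral_const_mul]
    exact integral_mono_ae hIA (hIAr.const_mul Θ) (hae.mono fun z h => h.2)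
end

section
/- Under assumptions 0 < a0min ≤ a0 ≤ a0max and τ < 1, with τ_r as defined, the spectrum of P_0⁻¹ P_r (equivalently of I + S̃_r + S̃_r^T) is contained in [1 − τ_r, 1 + τ_r]; in particular λ_min(I + S̃_r + S̃_r^T) ≥ 1 − τ_r > 0. -/
open MeasureTheory Matrix

lemma prod_null_preimage_fst {α β : Type*} [MeasurableSpace α] [MeasurableSpace β]
    (μ : Measure α) (ν : Measure β) {N : Set α} (hN : MeasurableSet N) (h : μ N = 0) :
    (μ.prod ν) (Prod.fst ⁻¹' N) = 0 := by
  rw [Measure.prod]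
  by_cases hm : AEMeasurable (fun x : α => ν.map (Prod.mk x)) μ
  · rw [Measure.bind, Measure.join_apply (hN.preimage measurable_fst),
      lintegral_map' (Measure.measurable_coe (hN.preimage measurable_fst)).aemeasurable hm]
    have key : ∀ x, (ν.map (Prod.mk x)) (Prod.fst ⁻¹' N)
        = N.indicator (fun _ => ν Set.univ) x := by
      intro x
      rw [Measure.map_apply measurable_prodMk_left (hN.preimage measurable_fst)]
      by_cases hx : x ∈ N
      · have : (Prod.mk x ⁻¹' (Prod.fst ⁻¹' N) : Set β) = Set.univ := by ext y; simp [hx]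
        simp [this, hx]
      · have : (Prod.mk x ⁻¹' (Prod.fst ⁻¹' N) : Set β) = ∅ := by ext y; simp [hx]
        simp [this, hx]
    simp_rw [key]
    rw [lintegral_indicator hN, setLIntegral_const]
    simp [h]
  · rw [Measure.bind, Measure.map_of_not_aemeasurable hm]
    simp

lemma prod_null_preimage_snd {α β : Type*} [MeasurableSpace α] [MeasurableSpace β]
    (μ : Measure α) (ν : Measure β) {M : Set β} (hM : MeasurableSet M) (h : ν M = 0) :
    (μ.prod ν) (Prod.snd ⁻¹' M) = 0 := by
  rw [Measure.prod]
  by_cases hm : AEMeasurable (fun x : α => ν.map (Prod.mk x)) μ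
  · rw [Measure.bind, Measure.join_apply (hM.preimage (measurable_snd : Measurable (Prod.snd : α × β → β))),
      lintegral_map' (Measure.measurable_coe (hM.preimage (measurable_snd : Measurable (Prod.snd : α × β → β)))).aemeasurable hm]
    have key : ∀ x, (ν.map (Prod.mk x)) (Prod.snd ⁻¹' M : Set (α × β)) = 0 := by
      intro x
      rw [Measure.map_apply measurable_prodMk_left (hM.preimage (measurable_snd : Measurable (Prod.snd : α × β → β)))]
      have : (Prod.mk x ⁻¹' (Prod.snd ⁻¹' M) : Set β) = M := by ext y; simp
      rw [this, h]
    simp [key]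
  · rw [Measure.bind, Measure.map_of_not_aemeasurable hm]
    simp

lemma ae_prod_fst {α β : Type*} [MeasurableSpace α] [MeasurableSpace β]
    (μ : Measure α) (ν : Measure β) {P : α → Prop} (h : ∀ᵐ x ∂μ, P x) :
    ∀ᵐ z ∂(μ.prod ν), P z.1 := by
  rw [ae_iff] at h ⊢
  obtain ⟨N, hsub, hNm, hN0⟩ := exists_measurable_superset_of_null h
  exact measure_mono_null (fun z hz => hsub hz) (prod_null_preimage_fst μ ν hNm hN0)

lemma ae_prod_snd {α β : Type*} [MeasurableSpace α] [MeasurableSpace β]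
    (μ : Measure α) (ν : Measure β) {P : β → Prop} (h : ∀ᵐ y ∂ν, P y) :
    ∀ᵐ z ∂(μ.prod ν), P z.2 := by
  rw [ae_iff] at h ⊢
  obtain ⟨M, hsub, hMm, hM0⟩ := exists_measurable_superset_of_null h
  exact measure_mono_null (fun z hz => hsub hz) (prod_null_preimage_snd μ ν hMm hM0)
open MeasureTheory Matrix

lemma quad_form_eq {Z : Type*} [MeasurableSpace Z] (μ : Measure Z) {N d : ℕ}
    (c : Z → ℝ) (W : Fin N → Z → EuclideanSpace ℝ (Fin d))
    (M : Matrix (Fin N) (Fin N) ℝ)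
    (hM : ∀ t s, M t s = ∫ z, c z * (inner ℝ (W s z) (W t z) : ℝ) ∂μ)
    (hI : ∀ t s, Integrable (fun z => c z * (inner ℝ (W s z) (W t z) : ℝ)) μ)
    (v : Fin N → ℝ) :
    v ⬝ᵥ M.mulVec v
      = ∫ z, c z * (inner ℝ (∑ i, v i • W i z) (∑ i, v i • W i z) : ℝ) ∂μ ∧
    Integrable (fun z => c z * (inner ℝ (∑ i, v i • W i z) (∑ i, v i • W i z) : ℝ)) μ := by
  have hpt : ∀ z, (∑ t, ∑ s, c z * (inner ℝ (W s z) (W t z) : ℝ) * (v t * v s))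
      = c z * (inner ℝ (∑ i, v i • W i z) (∑ i, v i • W i z) : ℝ) := by
    intro z
    rw [inner_sum]
    simp only [sum_inner, real_inner_smul_left, real_inner_smul_right, Finset.mul_sum]
    refine Finset.sum_congr rfl fun t _ => Finset.sum_congr rfl fun s _ => by ring
  have hIsum : Integrable
      (fun z => ∑ t, ∑ s, c z * (inner ℝ (W s z) (W t z) : ℝ) * (v t * v s)) μ :=
    integrable_finset_sum _ fun t _ => integrable_finset_sum _ fun s _ => (hI t s).mul_const _
  constructor
  · have h1 : v ⬝ᵥ M.mulVec v
        = ∑ t, ∑ s, (∫ z, c z * (inner ℝ (W s z) (W t z) : ℝ) ∂μ) * (v t * v s) := by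
      simp only [dotProduct, Matrix.mulVec, hM, Finset.mul_sum]
      exact Finset.sum_congr rfl fun t _ => Finset.sum_congr rfl fun s _ => by ring
    rw [h1]
    have h2 : ∀ t s : Fin N, (∫ z, c z * (inner ℝ (W s z) (W t z) : ℝ) ∂μ) * (v t * v s)
        = ∫ z, c z * (inner ℝ (W s z) (W t z) : ℝ) * (v t * v s) ∂μ :=
      fun t s => (integral_mul_const _ _).symm
    simp_rw [h2]
    calc (∑ t, ∑ s, ∫ z, c z * (inner ℝ (W s z) (W t z) : ℝ) * (v t * v s) ∂μ)
        = ∑ t, ∫ z, ∑ s, c z * (inner ℝ (W s z) (W t z) : ℝ) * (v t * v s) ∂μ :=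
          Finset.sum_congr rfl fun t _ =>
            (integral_finset_sum _ fun s _ => (hI t s).mul_const _).symm
      _ = ∫ z, ∑ t, ∑ s, c z * (inner ℝ (W s z) (W t z) : ℝ) * (v t * v s) ∂μ :=
          (integral_finset_sum _ fun t _ =>
            integrable_finset_sum _ fun s _ => (hI t s).mul_const _).symm
      _ = ∫ z, c z * (inner ℝ (∑ i, v i • W i z) (∑ i, v i • W i z) : ℝ) ∂μ :=
          integral_congr_ae (ae_of_all _ hpt)
  · exact hIsum.congr (ae_of_all _ hpt)

/-- The spectrum of `P0⁻¹ P_r` is contained in `[1 − τ_r, 1 + τ_r]`, where `P0` is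
the mean-based preconditioner and `P_r` the truncation preconditioner: every
generalized eigenvalue `λ` of the pencil `(P_r, P0)` satisfies
`1 − τ_r ≤ λ ≤ 1 + τ_r`, and `1 − τ_r > 0`.  Here `b m` plays the role of the
expansion coefficient `a_{m+1}`, `Y y m` the `m`-th coordinate of `y ∈ [-1,1]^ℕ`,
and `W t` represents the spatial gradient of the `t`-th Galerkin basis function. -/
theorem mean_based_truncation_spectrum
    {Ω Γ : Type*} [MeasurableSpace Ω] [MeasurableSpace Γ]
    (μ : Measure Ω) (ν : Measure Γ) {d N : ℕ} (r : ℕ)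
    (p : Γ → ℝ) (hp : ∀ y, 0 ≤ p y)
    (Y : Γ → ℕ → ℝ) (hY : ∀ᵐ y ∂ν, ∀ m, |Y y m| ≤ 1)
    (a0 : Ω → ℝ) (b : ℕ → Ω → ℝ) (a0min a0max τ τr : ℝ)
    (ha0min : 0 < a0min)
    (ha0 : ∀ᵐ x ∂μ, a0min ≤ a0 x ∧ a0 x ≤ a0max)
    (hτr : ∀ᵐ x ∂μ, (∑ m ∈ Finset.range r, |b m x|) ≤ a0min * τr)
    (hτr0 : 0 ≤ τr) (hτrτ : τr ≤ τ) (hτ1 : τ < 1)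
    (W : Fin N → Ω × Γ → EuclideanSpace ℝ (Fin d))
    (P0 Pr : Matrix (Fin N) (Fin N) ℝ)
    (hP0 : ∀ t s, P0 t s =
      ∫ z, p z.2 * (a0 z.1 * (inner ℝ (W s z) (W t z) : ℝ)) ∂(μ.prod ν))
    (hPr : ∀ t s, Pr t s =
      ∫ z, p z.2 * ((a0 z.1 + ∑ m ∈ Finset.range r, b m z.1 * Y z.2 m) *
        (inner ℝ (W s z) (W t z) : ℝ)) ∂(μ.prod ν))
    (hI0 : ∀ t s, Integrable
      (fun z => p z.2 * (a0 z.1 * (inner ℝ (W s z) (W t z) : ℝ))) (μ.prod ν))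
    (hIr : ∀ t s, Integrable
      (fun z => p z.2 * ((a0 z.1 + ∑ m ∈ Finset.range r, b m z.1 * Y z.2 m) *
        (inner ℝ (W s z) (W t z) : ℝ))) (μ.prod ν))
    (hP0pd : P0.PosDef) :
    (∀ (lam : ℝ) (v : Fin N → ℝ), v ≠ 0 → Pr.mulVec v = lam • P0.mulVec v →
      1 - τr ≤ lam ∧ lam ≤ 1 + τr) ∧
    0 < 1 - τr := by
  have h1τr : (0:ℝ) < 1 - τr := by linarith
  refine ⟨fun lam v hv hev => ?_, h1τr⟩
  set c0 : Ω × Γ → ℝ := fun z => p z.2 * a0 z.1 with hc0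
  set cr : Ω × Γ → ℝ :=
    fun z => p z.2 * (a0 z.1 + ∑ m ∈ Finset.range r, b m z.1 * Y z.2 m) with hcr
  have hq0 := quad_form_eq (μ.prod ν) c0 W P0
    (fun t s => by rw [hP0 t s]; simp only [hc0]; congr 1; funext z; ring)
    (fun t s => ((hI0 t s).congr (ae_of_all _ fun z => by simp only [hc0]; ring)))
    v
  have hqr := quad_form_eq (μ.prod ν) cr W Pr
    (fun t s => by rw [hPr t s]; simp only [hcr]; congr 1; funext z; ring)
    (fun t s => ((hIr t s).congr (ae_of_all _ fun z => by simp only [hcr]; ring)))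
    v
  set u : Ω × Γ → EuclideanSpace ℝ (Fin d) := fun z => ∑ i, v i • W i z with hu
  set F0 : Ω × Γ → ℝ := fun z => c0 z * (inner ℝ (u z) (u z) : ℝ) with hF0
  set Fr : Ω × Γ → ℝ := fun z => cr z * (inner ℝ (u z) (u z) : ℝ) with hFr
  obtain ⟨hQ0eq, hF0int⟩ := hq0
  obtain ⟨hQreq, hFrint⟩ := hqr
  -- a.e. bounds
  have hae : ∀ᵐ z ∂(μ.prod ν),
      (1 - τr) * F0 z ≤ Fr z ∧ Fr z ≤ (1 + τr) * F0 z := by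
    filter_upwards [ae_prod_fst μ ν (ha0.and hτr), ae_prod_snd μ ν hY] with z hz1 hz2
    obtain ⟨⟨hmin, _⟩, hb⟩ := hz1
    have hq : (0:ℝ) ≤ (inner ℝ (u z) (u z) : ℝ) := real_inner_self_nonneg
    have hpq : (0:ℝ) ≤ p z.2 * (inner ℝ (u z) (u z) : ℝ) := mul_nonneg (hp z.2) hq
    have hS : |∑ m ∈ Finset.range r, b m z.1 * Y z.2 m| ≤ τr * a0 z.1 := by
      calc |∑ m ∈ Finset.range r, b m z.1 * Y z.2 m|
          ≤ ∑ m ∈ Finset.range r, |b m z.1 * Y z.2 m| := Finset.abs_sum_le_sum_abs _ _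
        _ ≤ ∑ m ∈ Finset.range r, |b m z.1| := by
            refine Finset.sum_le_sum fun m _ => ?_
            rw [abs_mul]
            exact mul_le_of_le_one_right (abs_nonneg _) (hz2 m)
        _ ≤ a0min * τr := hb
        _ ≤ τr * a0 z.1 := by
            rw [mul_comm]
            exact mul_le_mul_of_nonneg_left hmin hτr0
    rw [abs_le] at hS
    constructor
    · have : (1 - τr) * a0 z.1 ≤ a0 z.1 + ∑ m ∈ Finset.range r, b m z.1 * Y z.2 m := by
        linarith [hS.1]
      simp only [hF0, hFr, hc0, hcr]
      nlinarith [mul_le_mul_of_nonneg_left this hpq]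
    · have : a0 z.1 + ∑ m ∈ Finset.range r, b m z.1 * Y z.2 m ≤ (1 + τr) * a0 z.1 := by
        linarith [hS.2]
      simp only [hF0, hFr, hc0, hcr]
      nlinarith [mul_le_mul_of_nonneg_left this hpq]
  have hlow : (1 - τr) * (v ⬝ᵥ P0.mulVec v) ≤ v ⬝ᵥ Pr.mulVec v := by
    rw [hQ0eq, hQreq, ← integral_const_mul]
    refine integral_mono_ae (hF0int.const_mul _) hFrint ?_
    filter_upwards [hae] with z hz using hz.1
  have hhigh : v ⬝ᵥ Pr.mulVec v ≤ (1 + τr) * (v ⬝ᵥ P0.mulVec v) := by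
    rw [hQ0eq, hQreq, ← integral_const_mul]
    refine integral_mono_ae hFrint (hF0int.const_mul _) ?_
    filter_upwards [hae] with z hz using hz.2
  have hQ0pos : 0 < v ⬝ᵥ P0.mulVec v := by
    have := hP0pd.dotProduct_mulVec_pos hv
    simpa using this
  have hQr : v ⬝ᵥ Pr.mulVec v = lam * (v ⬝ᵥ P0.mulVec v) := by
    rw [hev]
    simp [dotProduct, Finset.mul_sum]
    exact Finset.sum_congr rfl fun i _ => by ring
  rw [hQr] at hlow hhigh
  exact ⟨le_of_mul_le_mul_right hlow hQ0pos, le_of_mul_le_mul_right hhigh hQ0pos⟩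
end

section
/- Let P_r = D0 + S_r + S_r^T be symmetric positive definite with λ_min(D0^{-1/2} P_r D0^{-1/2}) ≥ 1 − τ_r > 0 and σ_max(D0^{-1/2} S_r D0^{-1/2}) ≤ c. Then the SBGS approximation P̃_r = (D0 + S_r) D0⁻¹ (D0 + S_r^T) satisfies, for every nonzero v, 1 ≤ (v^T P̃_r v)/(v^T P_r v) ≤ 1 + c²/(1 − τ_r); i.e., the spectrum of P_r⁻¹ P̃_r lies in [1, 1 + δ_r] with δ_r = c²/(1 − τ_r). -/
set_option maxHeartbeats 1000000


open Matrix

/-- The largest singular value (spectral norm) of a real matrix. -/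
noncomputable def sigmaMax {m n : Type*} [Fintype m] [Fintype n] [DecidableEq n]
    (A : Matrix m n ℝ) : ℝ :=
  ‖LinearMap.toContinuousLinearMap (Matrix.toEuclideanLin A)‖

/-- The square root of a positive semidefinite matrix, as `Matrix.PosSemidef.sqrt` was
defined in the older Mathlib (removed since). -/
noncomputable def posSemidefSqrt {n : Type*} [Fintype n] [DecidableEq n]
    {A : Matrix n n ℝ} (hA : A.PosSemidef) : Matrix n n ℝ :=
  hA.1.eigenvectorUnitary.1 * diagonal ((↑) ∘ (√·) ∘ hA.1.eigenvalues) *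
    (star hA.1.eigenvectorUnitary : Matrix n n ℝ)

private lemma sigmaMax_bound {n : ℕ} (M : Matrix (Fin n) (Fin n) ℝ) {c : ℝ} (hc : 0 ≤ c)
    (hσ : sigmaMax M ≤ c) (w : Fin n → ℝ) :
    (Mᵀ *ᵥ w) ⬝ᵥ (Mᵀ *ᵥ w) ≤ c ^ 2 * (w ⬝ᵥ w) := by
  set u : Fin n → ℝ := Mᵀ *ᵥ w with hu
  set U : EuclideanSpace ℝ (Fin n) := (WithLp.equiv 2 _).symm u with hU
  set W : EuclideanSpace ℝ (Fin n) := (WithLp.equiv 2 _).symm w with hW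
  have hUu : u ⬝ᵥ u = ‖U‖ ^ 2 := by
    rw [← real_inner_self_eq_norm_sq, hU, WithLp.equiv_symm_apply, EuclideanSpace.inner_toLp_toLp, star_trivial]
  have hWw : w ⬝ᵥ w = ‖W‖ ^ 2 := by
    rw [← real_inner_self_eq_norm_sq, hW, WithLp.equiv_symm_apply, EuclideanSpace.inner_toLp_toLp, star_trivial]
  have hkey : u ⬝ᵥ u = (inner ℝ W (Matrix.toEuclideanLin M U) : ℝ) := by
    rw [hU, WithLp.equiv_symm_apply, Matrix.toEuclideanLin_toLp, hW, WithLp.equiv_symm_apply,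
      EuclideanSpace.inner_toLp_toLp, star_trivial, hu,
      Matrix.mulVec_transpose, Matrix.toLin'_apply, dotProduct_comm (M *ᵥ (w ᵥ* M)) w,
      Matrix.dotProduct_mulVec]
  have hMU : ‖Matrix.toEuclideanLin M U‖ ≤ c * ‖U‖ := by
    have h1 := (LinearMap.toContinuousLinearMap (Matrix.toEuclideanLin M)).le_opNorm U
    have h2 : (LinearMap.toContinuousLinearMap (Matrix.toEuclideanLin M)) U
        = Matrix.toEuclideanLin M U := rfl
    rw [h2] at h1
    calc ‖Matrix.toEuclideanLin M U‖ ≤ sigmaMax M * ‖U‖ := h1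
      _ ≤ c * ‖U‖ := by
          exact mul_le_mul_of_nonneg_right hσ (norm_nonneg _)
  have hcs : (inner ℝ W (Matrix.toEuclideanLin M U) : ℝ) ≤ ‖W‖ * ‖Matrix.toEuclideanLin M U‖ :=
    real_inner_le_norm _ _
  have h3 : ‖U‖ ^ 2 ≤ ‖W‖ * (c * ‖U‖) := by
    calc ‖U‖ ^ 2 = u ⬝ᵥ u := hUu.symm
      _ ≤ ‖W‖ * ‖Matrix.toEuclideanLin M U‖ := hkey ▸ hcs
      _ ≤ ‖W‖ * (c * ‖U‖) := mul_le_mul_of_nonneg_left hMU (norm_nonneg _)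
  rw [hUu, hWw]
  nlinarith [norm_nonneg U, norm_nonneg W, sq_nonneg (c * ‖W‖ - ‖U‖)]

/-- Spectral bounds for the SBGS approximation: if
`λ_min(D0^{-1/2} P_r D0^{-1/2}) ≥ 1 − τ_r > 0` (stated in Rayleigh-quotient form)
and `σ_max(D0^{-1/2} S_r D0^{-1/2}) ≤ c`, then the spectrum of `P_r⁻¹ P̃_r` lies in
`[1, 1 + c²/(1 − τ_r)]`, i.e. for every nonzero `v`,
`1 ≤ vᵀP̃_r v / vᵀP_r v ≤ 1 + c²/(1 − τ_r)`. -/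
theorem sbgs_spectral_bounds
    {n : ℕ} (D0 S : Matrix (Fin n) (Fin n) ℝ)
    (hD0 : D0.PosDef) (hP : (D0 + S + Sᵀ).PosDef)
    (τr c : ℝ) (hτr : τr < 1) (hc : 0 ≤ c)
    (hlam : ∀ w : Fin n → ℝ, (1 - τr) * (w ⬝ᵥ w) ≤
      w ⬝ᵥ ((posSemidefSqrt hD0.posSemidef)⁻¹ * (D0 + S + Sᵀ) *
        (posSemidefSqrt hD0.posSemidef)⁻¹).mulVec w)
    (hσ : sigmaMax ((posSemidefSqrt hD0.posSemidef)⁻¹ * S * (posSemidefSqrt hD0.posSemidef)⁻¹) ≤ c) :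
    ∀ v : Fin n → ℝ, v ≠ 0 →
      1 ≤ (v ⬝ᵥ ((D0 + S) * D0⁻¹ * (D0 + Sᵀ)).mulVec v) /
            (v ⬝ᵥ (D0 + S + Sᵀ).mulVec v) ∧
      (v ⬝ᵥ ((D0 + S) * D0⁻¹ * (D0 + Sᵀ)).mulVec v) /
            (v ⬝ᵥ (D0 + S + Sᵀ).mulVec v) ≤ 1 + c ^ 2 / (1 - τr) := by
  intro v hv
  set Q : Matrix (Fin n) (Fin n) ℝ := posSemidefSqrt hD0.posSemidef with hQdef
  set R : Matrix (Fin n) (Fin n) ℝ := Q⁻¹ with hRdef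
  set P : Matrix (Fin n) (Fin n) ℝ := D0 + S + Sᵀ with hPdef
  have hQH : Qᵀ = Q := by
    rw [hQdef, posSemidefSqrt, Matrix.star_eq_conjTranspose,
      conjTranspose_eq_transpose_of_trivial, Matrix.transpose_mul, Matrix.transpose_mul,
      Matrix.transpose_transpose, diagonal_transpose, Matrix.mul_assoc]
  have hQ2 : Q * Q = D0 := by
    have hs := hD0.posSemidef.1.spectral_theorem
    rw [Unitary.conjStarAlgAut_apply] at hs
    set U := hD0.posSemidef.1.eigenvectorUnitary with hUdef
    have hsu : (star (U : Matrix (Fin n) (Fin n) ℝ)) * (U : Matrix (Fin n) (Fin n) ℝ) = 1 :=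
      Unitary.star_mul_self_of_mem U.2
    set D : Matrix (Fin n) (Fin n) ℝ := diagonal ((↑) ∘ (√·) ∘ hD0.posSemidef.1.eigenvalues)
      with hD
    have hdd : D * D = diagonal ((RCLike.ofReal : ℝ → ℝ) ∘ hD0.posSemidef.1.eigenvalues) := by
      rw [hD, diagonal_mul_diagonal]
      congr 1
      funext i
      simp [Real.mul_self_sqrt (hD0.posSemidef.eigenvalues_nonneg i)]
    rw [hs, hQdef, posSemidefSqrt, ← hdd]
    calc _ = (U : Matrix _ _ ℝ) * D * (star (U : Matrix _ _ ℝ) * (U : Matrix _ _ ℝ)) * D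
          * star (U : Matrix _ _ ℝ) := by simp only [Matrix.mul_assoc]; rfl
      _ = _ := by rw [hsu, Matrix.mul_one]; simp only [Matrix.mul_assoc]
  clear_value Q
  have hdQ : Q.det ≠ 0 := by
    intro h
    have := hD0.det_pos
    rw [← hQ2, Matrix.det_mul, h, mul_zero] at this
    exact lt_irrefl _ this
  have hQR : Q * R = 1 := Matrix.mul_nonsing_inv _ (isUnit_iff_ne_zero.2 hdQ)
  have hRQ : R * Q = 1 := Matrix.nonsing_inv_mul _ (isUnit_iff_ne_zero.2 hdQ)
  have hRt : Rᵀ = R := by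
    rw [hRdef, Matrix.transpose_nonsing_inv, hQH]
  have hDinv : D0⁻¹ = R * R := by
    rw [← hQ2, Matrix.mul_inv_rev]
  have hD1 : D0 * D0⁻¹ = 1 := by
    rw [hDinv, ← hQ2]
    calc Q * Q * (R * R) = Q * (Q * R) * R := by simp only [Matrix.mul_assoc]
      _ = 1 := by rw [hQR, Matrix.mul_one, hQR]
  have hD2 : D0⁻¹ * D0 = 1 := by
    rw [hDinv, ← hQ2]
    calc R * R * (Q * Q) = R * (R * Q) * Q := by simp only [Matrix.mul_assoc]
      _ = 1 := by rw [hRQ, Matrix.mul_one, hRQ]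
  -- expansion of the SBGS matrix
  have hexp : (D0 + S) * D0⁻¹ * (D0 + Sᵀ) = P + S * D0⁻¹ * Sᵀ := by
    have e : (D0 + S) * D0⁻¹ * (D0 + Sᵀ)
        = D0 * D0⁻¹ * D0 + D0 * D0⁻¹ * Sᵀ + S * (D0⁻¹ * D0) + S * D0⁻¹ * Sᵀ := by
      noncomm_ring
    rw [e, hD1, hD2, Matrix.one_mul, Matrix.one_mul, Matrix.mul_one, hPdef]
    noncomm_ring
  set a : ℝ := v ⬝ᵥ P *ᵥ v with hadef
  set b : ℝ := v ⬝ᵥ (S * D0⁻¹ * Sᵀ) *ᵥ v with hbdef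
  have hnum : v ⬝ᵥ ((D0 + S) * D0⁻¹ * (D0 + Sᵀ)) *ᵥ v = a + b := by
    rw [hexp, Matrix.add_mulVec, dotProduct_add]
  have ha : 0 < a := by
    have := hP.dotProduct_mulVec_pos hv
    rwa [star_trivial] at this
  have hb : 0 ≤ b := by
    have hps : (S * D0⁻¹ * Sᴴ).PosSemidef :=
      (hD0.inv.posSemidef).mul_mul_conjTranspose_same S
    rw [conjTranspose_eq_transpose_of_trivial] at hps
    have := hps.dotProduct_mulVec_nonneg v
    rwa [star_trivial] at this
  -- key quadratic bound
  set w : Fin n → ℝ := Q *ᵥ v with hwdef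
  have hwa : (1 - τr) * (w ⬝ᵥ w) ≤ a := by
    have h := hlam w
    have h2 : (R * P * R) *ᵥ w = (R * P) *ᵥ v := by
      rw [hwdef, Matrix.mulVec_mulVec]
      have e : R * P * R * Q = R * P := by
        calc R * P * R * Q = R * P * (R * Q) := by simp only [Matrix.mul_assoc]
          _ = R * P := by rw [hRQ, Matrix.mul_one]
      rw [e]
    have h3 : w ⬝ᵥ (R * P * R) *ᵥ w = a := by
      rw [h2, hwdef, Matrix.dotProduct_mulVec, ← Matrix.vecMul_transpose,
        Matrix.vecMul_vecMul, hQH, hadef, Matrix.dotProduct_mulVec]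
      have e : Q * (R * P) = P := by
        calc Q * (R * P) = (Q * R) * P := by simp only [Matrix.mul_assoc]
          _ = P := by rw [hQR, Matrix.one_mul]
      rw [e]
    rwa [h3] at h
  set M : Matrix (Fin n) (Fin n) ℝ := R * S * R with hMdef
  have hbu : b = (Mᵀ *ᵥ w) ⬝ᵥ (Mᵀ *ᵥ w) := by
    have hMt : Mᵀ = R * Sᵀ * R := by
      rw [hMdef, Matrix.transpose_mul, Matrix.transpose_mul, hRt, Matrix.mul_assoc]
    have hu : Mᵀ *ᵥ w = (R * Sᵀ) *ᵥ v := by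
      rw [hMt, hwdef, Matrix.mulVec_mulVec]
      have e : R * Sᵀ * R * Q = R * Sᵀ := by
        calc R * Sᵀ * R * Q = R * Sᵀ * (R * Q) := by simp only [Matrix.mul_assoc]
          _ = R * Sᵀ := by rw [hRQ, Matrix.mul_one]
      rw [e]
    rw [hu, Matrix.dotProduct_mulVec, ← Matrix.vecMul_transpose, Matrix.vecMul_vecMul,
      hbdef, Matrix.dotProduct_mulVec]
    congr 1
    rw [Matrix.transpose_mul, hRt, Matrix.transpose_transpose, hDinv]
    simp only [Matrix.mul_assoc]
  have hbb : b ≤ c ^ 2 * (w ⬝ᵥ w) := by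
    rw [hbu]
    exact sigmaMax_bound M hc hσ w
  have hww : 0 ≤ w ⬝ᵥ w := Finset.sum_nonneg fun i _ => mul_self_nonneg (w i)
  have h1τ : (0:ℝ) < 1 - τr := by linarith
  have hfin : b ≤ c ^ 2 / (1 - τr) * a := by
    rw [div_mul_eq_mul_div, le_div_iff₀ h1τ]
    nlinarith [sq_nonneg c]
  constructor
  · rw [hnum, le_div_iff₀ ha]
    linarith
  · rw [hnum, div_le_iff₀ ha]
    have : (1 + c ^ 2 / (1 - τr)) * a = a + c ^ 2 / (1 - τr) * a := by ring
    rw [this]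
    linarith
end

section
/- Under the alternative assumption τ̃ := ‖a0⁻¹ Σ_{m=1}^∞ |a_m|‖_∞ < 1, with τ̃_r := ‖a0⁻¹ Σ_{m=1}^r |a_m|‖_∞, there holds a.e. in Ω × Γ: ((1−τ̃_r)/(1+τ̃)) a(x,y) ≤ a_r(x,y) ≤ ((1+τ̃_r)/(1−τ̃)) a(x,y), and consequently the generalized eigenvalues of the pair of Gram matrices (A, P_r) lie in [(1−τ̃)/(1+τ̃_r), (1+τ̃)/(1−τ̃_r)]. -/
open MeasureTheory Matrix

section AuxLemmas

lemma my_prod_null_left {Ω Γ : Type*} [MeasurableSpace Ω] [MeasurableSpace Γ]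
    (μ : Measure Ω) (ν : Measure Γ) {S : Set Ω} (hS : MeasurableSet S) (h : μ S = 0) :
    μ.prod ν (S ×ˢ (Set.univ : Set Γ)) = 0 := by
  rw [Measure.prod_def, Measure.bind]
  by_cases hg : AEMeasurable (fun x => Measure.map (Prod.mk x) ν) μ
  · rw [Measure.join_apply (hS.prod MeasurableSet.univ),
      lintegral_map' (Measure.measurable_coe (hS.prod MeasurableSet.univ)).aemeasurable hg]
    have : ∀ x, (Measure.map (Prod.mk x) ν) (S ×ˢ (Set.univ : Set Γ)) =
        S.indicator (fun _ => ν Set.univ) x := by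
      intro x
      rw [Measure.map_apply measurable_prodMk_left (hS.prod MeasurableSet.univ)]
      by_cases hx : x ∈ S
      · simp [Set.mk_preimage_prod_right_eq_if, hx, Set.indicator_of_mem]
      · simp [Set.mk_preimage_prod_right_eq_if, hx, Set.indicator_of_notMem]
    rw [lintegral_congr this, lintegral_indicator hS]
    simp [Measure.restrict_apply MeasurableSet.univ, Set.univ_inter, h]
  · rw [Measure.map_of_not_aemeasurable hg, Measure.join_zero]
    rfl

lemma my_prod_null_right {Ω Γ : Type*} [MeasurableSpace Ω] [MeasurableSpace Γ]
    (μ : Measure Ω) (ν : Measure Γ) {T : Set Γ} (hT : MeasurableSet T) (h : ν T = 0) :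
    μ.prod ν ((Set.univ : Set Ω) ×ˢ T) = 0 := by
  rw [Measure.prod_def, Measure.bind]
  by_cases hg : AEMeasurable (fun x => Measure.map (Prod.mk x) ν) μ
  · rw [Measure.join_apply (MeasurableSet.univ.prod hT),
      lintegral_map' (Measure.measurable_coe (MeasurableSet.univ.prod hT)).aemeasurable hg]
    have : ∀ x, (Measure.map (Prod.mk x) ν) ((Set.univ : Set Ω) ×ˢ T) = ν T := by
      intro x
      rw [Measure.map_apply measurable_prodMk_left (MeasurableSet.univ.prod hT)]
      congr 1
      ext y; simp
    rw [lintegral_congr this, h]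
    simp
  · rw [Measure.map_of_not_aemeasurable hg, Measure.join_zero]
    rfl

lemma my_ae_fst {Ω Γ : Type*} [MeasurableSpace Ω] [MeasurableSpace Γ]
    (μ : Measure Ω) (ν : Measure Γ) {P : Ω → Prop} (h : ∀ᵐ x ∂μ, P x) :
    ∀ᵐ z ∂μ.prod ν, P z.1 := by
  rw [ae_iff] at h ⊢
  refine measure_mono_null (fun z hz => ?_)
    (my_prod_null_left μ ν (measurableSet_toMeasurable μ _) (by rwa [measure_toMeasurable]))
  exact ⟨subset_toMeasurable μ _ hz, Set.mem_univ _⟩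

lemma my_ae_snd {Ω Γ : Type*} [MeasurableSpace Ω] [MeasurableSpace Γ]
    (μ : Measure Ω) (ν : Measure Γ) {Q : Γ → Prop} (h : ∀ᵐ y ∂ν, Q y) :
    ∀ᵐ z ∂μ.prod ν, Q z.2 := by
  rw [ae_iff] at h ⊢
  refine measure_mono_null (fun z hz => ?_)
    (my_prod_null_right μ ν (measurableSet_toMeasurable ν _) (by rwa [measure_toMeasurable]))
  exact ⟨Set.mem_univ _, subset_toMeasurable ν _ hz⟩

lemma my_coeff_bounds {a0v sF sG τt τtr : ℝ}
    (hF : |sF| ≤ τt * a0v) (hG : |sG| ≤ τtr * a0v)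
    (hτt1 : τt < 1) (hτtr0 : 0 ≤ τtr) (hτtrτ : τtr ≤ τt) :
    ((1 - τtr) / (1 + τt)) * (a0v + sF) ≤ a0v + sG ∧
    a0v + sG ≤ ((1 + τtr) / (1 - τt)) * (a0v + sF) ∧
    ((1 - τt) / (1 + τtr)) * (a0v + sG) ≤ a0v + sF ∧
    a0v + sF ≤ ((1 + τt) / (1 - τtr)) * (a0v + sG) := by
  have hτt0 : 0 ≤ τt := le_trans hτtr0 hτtrτ
  have hτtr1 : τtr < 1 := lt_of_le_of_lt hτtrτ hτt1
  obtain ⟨hF1, hF2⟩ := abs_le.mp hF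
  obtain ⟨hG1, hG2⟩ := abs_le.mp hG
  refine ⟨?_, ?_, ?_, ?_⟩
  · rw [div_mul_eq_mul_div, div_le_iff₀ (by linarith)]
    nlinarith
  · rw [div_mul_eq_mul_div, le_div_iff₀ (by linarith)]
    nlinarith
  · rw [div_mul_eq_mul_div, div_le_iff₀ (by linarith)]
    nlinarith
  · rw [div_mul_eq_mul_div, le_div_iff₀ (by linarith)]
    nlinarith

lemma my_tsum_abs_le (b y : ℕ → ℝ) (hs : Summable fun m => |b m|) (hy : ∀ m, |y m| ≤ 1) :
    |∑' m, b m * y m| ≤ ∑' m, |b m| := by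
  have h : ∀ m, |b m * y m| ≤ |b m| := fun m => by
    rw [abs_mul]; exact mul_le_of_le_one_right (abs_nonneg _) (hy m)
  have habs : Summable fun m => |b m * y m| :=
    Summable.of_nonneg_of_le (fun m => abs_nonneg _) h hs
  have habs' : Summable fun m => ‖b m * y m‖ := habs
  have h1 : ‖∑' m, b m * y m‖ ≤ ∑' m, ‖b m * y m‖ := norm_tsum_le_tsum_norm habs'
  rw [Real.norm_eq_abs] at h1
  have h2 : (∑' m, ‖b m * y m‖) = ∑' m, |b m * y m| := rfl
  exact le_trans (h1.trans (le_of_eq h2)) (Summable.tsum_le_tsum h habs hs)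

lemma my_finsum_abs_le (r : ℕ) (b y : ℕ → ℝ) (hy : ∀ m, |y m| ≤ 1) :
    |∑ m ∈ Finset.range r, b m * y m| ≤ ∑ m ∈ Finset.range r, |b m| := by
  refine (Finset.abs_sum_le_sum_abs _ _).trans (Finset.sum_le_sum fun m _ => ?_)
  rw [abs_mul]; exact mul_le_of_le_one_right (abs_nonneg _) (hy m)

lemma my_quad_sum {N : ℕ} {E : Type*} [NormedAddCommGroup E] [InnerProductSpace ℝ E]
    (v : Fin N → ℝ) (w : Fin N → E) :
    ∑ t, ∑ s, v t * v s * (inner ℝ (w s) (w t) : ℝ) = ‖∑ t, v t • w t‖ ^ 2 := by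
  rw [← real_inner_self_eq_norm_sq, inner_sum]
  refine Finset.sum_congr rfl fun t _ => ?_
  rw [real_inner_smul_right, sum_inner, Finset.mul_sum]
  refine Finset.sum_congr rfl fun s _ => ?_
  rw [real_inner_smul_left]; ring

lemma my_quad_form {α : Type*} [MeasurableSpace α] {π : Measure α} {N : ℕ}
    {E : Type*} [NormedAddCommGroup E] [InnerProductSpace ℝ E]
    (M : Matrix (Fin N) (Fin N) ℝ) (c : α → ℝ) (W : Fin N → α → E)
    (hM : ∀ t s, M t s = ∫ z, c z * (inner ℝ (W s z) (W t z) : ℝ) ∂π)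
    (hI : ∀ t s, Integrable (fun z => c z * (inner ℝ (W s z) (W t z) : ℝ)) π)
    (v : Fin N → ℝ) :
    v ⬝ᵥ M.mulVec v = ∫ z, c z * ‖∑ t, v t • W t z‖ ^ 2 ∂π ∧
    Integrable (fun z => c z * ‖∑ t, v t • W t z‖ ^ 2) π := by
  have key : ∀ z, ∑ t, ∑ s, (v t * v s) * (c z * (inner ℝ (W s z) (W t z) : ℝ)) =
      c z * ‖∑ t, v t • W t z‖ ^ 2 := by
    intro z
    rw [← my_quad_sum v (fun t => W t z), Finset.mul_sum]
    refine Finset.sum_congr rfl fun t _ => ?_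
    rw [Finset.mul_sum]
    exact Finset.sum_congr rfl fun s _ => by ring
  have hIts : ∀ t s : Fin N, Integrable
      (fun z => (v t * v s) * (c z * (inner ℝ (W s z) (W t z) : ℝ))) π :=
    fun t s => (hI t s).const_mul _
  have key2 : ∀ z, (∑ i ∈ Finset.univ ×ˢ Finset.univ,
      (v i.1 * v i.2) * (c z * (inner ℝ (W i.2 z) (W i.1 z) : ℝ))) =
      c z * ‖∑ t, v t • W t z‖ ^ 2 := fun z => by
    rw [Finset.sum_product]; exact key z
  have hInt : Integrable (fun z => c z * ‖∑ t, v t • W t z‖ ^ 2) π := by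
    have h0 := integrable_finset_sum (μ := π) (Finset.univ ×ˢ Finset.univ)
      (f := fun (ts : Fin N × Fin N) z =>
        (v ts.1 * v ts.2) * (c z * (inner ℝ (W ts.2 z) (W ts.1 z) : ℝ)))
      (fun ts _ => hIts ts.1 ts.2)
    exact h0.congr (Filter.Eventually.of_forall fun z => by simpa using key2 z)
  refine ⟨?_, hInt⟩
  have expand : v ⬝ᵥ M.mulVec v = ∑ t, ∑ s, v t * v s * M t s := by
    simp only [dotProduct, Matrix.mulVec, Finset.mul_sum]
    exact Finset.sum_congr rfl fun t _ => Finset.sum_congr rfl fun s _ => by ring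
  rw [expand]
  calc ∑ t, ∑ s, v t * v s * M t s
      = ∑ t, ∑ s, ∫ z, (v t * v s) * (c z * (inner ℝ (W s z) (W t z) : ℝ)) ∂π := by
        refine Finset.sum_congr rfl fun t _ => Finset.sum_congr rfl fun s _ => ?_
        rw [hM t s, ← integral_const_mul]
    _ = ∑ t, ∫ z, ∑ s, (v t * v s) * (c z * (inner ℝ (W s z) (W t z) : ℝ)) ∂π := by
        refine Finset.sum_congr rfl fun t _ => ?_
        exact (integral_finset_sum _ (fun s _ => hIts t s)).symm
    _ = ∫ z, ∑ t, ∑ s, (v t * v s) * (c z * (inner ℝ (W s z) (W t z) : ℝ)) ∂π :=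
        (integral_finset_sum _ (fun t _ => integrable_finset_sum _ (fun s _ => hIts t s))).symm
    _ = ∫ z, c z * ‖∑ t, v t • W t z‖ ^ 2 ∂π :=
        integral_congr_ae (Filter.Eventually.of_forall fun z => key z)

end AuxLemmas

/-- Under the alternative assumption `τ̃ = ‖a0⁻¹ Σ_{m=1}^∞ |a_m|‖_∞ < 1` (expressed
via the a.e. bounds `Σ' |b m x| ≤ τt * a0 x` and `Σ_{m<r} |b m x| ≤ τtr * a0 x`),
the truncated coefficient `a_r` is equivalent to `a` pointwise a.e., and the
generalized eigenvalues of the pair of Gram matrices `(A, P_r)` lie in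
`[(1−τ̃)/(1+τ̃_r), (1+τ̃)/(1−τ̃_r)]`.  Here `b m` plays the role of `a_{m+1}`,
`Y y m` the `m`-th coordinate of `y ∈ [-1,1]^ℕ`, and `W t` represents the spatial
gradient of the `t`-th Galerkin basis function. -/
theorem alternative_assumption_bounds
    {Ω Γ : Type*} [MeasurableSpace Ω] [MeasurableSpace Γ]
    (μ : Measure Ω) (ν : Measure Γ) {d N : ℕ} (r : ℕ)
    (p : Γ → ℝ) (hp : ∀ y, 0 ≤ p y)
    (Y : Γ → ℕ → ℝ) (hY : ∀ᵐ y ∂ν, ∀ m, |Y y m| ≤ 1)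
    (a0 : Ω → ℝ) (b : ℕ → Ω → ℝ) (a0min τt τtr : ℝ)
    (ha0min : 0 < a0min) (ha0 : ∀ᵐ x ∂μ, a0min ≤ a0 x)
    (hsum : ∀ x, Summable fun m => |b m x|)
    (hτt : ∀ᵐ x ∂μ, (∑' m, |b m x|) ≤ τt * a0 x)
    (hτtr : ∀ᵐ x ∂μ, (∑ m ∈ Finset.range r, |b m x|) ≤ τtr * a0 x)
    (hτt1 : τt < 1) (hτtr0 : 0 ≤ τtr) (hτtrτ : τtr ≤ τt)
    (W : Fin N → Ω × Γ → EuclideanSpace ℝ (Fin d))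
    (A Pr : Matrix (Fin N) (Fin N) ℝ)
    (hA : ∀ t s, A t s =
      ∫ z, p z.2 * ((a0 z.1 + ∑' m, b m z.1 * Y z.2 m) *
        (inner ℝ (W s z) (W t z) : ℝ)) ∂(μ.prod ν))
    (hPr : ∀ t s, Pr t s =
      ∫ z, p z.2 * ((a0 z.1 + ∑ m ∈ Finset.range r, b m z.1 * Y z.2 m) *
        (inner ℝ (W s z) (W t z) : ℝ)) ∂(μ.prod ν))
    (hIA : ∀ t s, Integrable
      (fun z => p z.2 * ((a0 z.1 + ∑' m, b m z.1 * Y z.2 m) *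
        (inner ℝ (W s z) (W t z) : ℝ))) (μ.prod ν))
    (hIr : ∀ t s, Integrable
      (fun z => p z.2 * ((a0 z.1 + ∑ m ∈ Finset.range r, b m z.1 * Y z.2 m) *
        (inner ℝ (W s z) (W t z) : ℝ))) (μ.prod ν))
    (hPrpd : Pr.PosDef) :
    (∀ y : ℕ → ℝ, (∀ m, |y m| ≤ 1) →
      ∀ᵐ x ∂μ,
        ((1 - τtr) / (1 + τt)) * (a0 x + ∑' m, b m x * y m) ≤
          a0 x + ∑ m ∈ Finset.range r, b m x * y m ∧
        a0 x + ∑ m ∈ Finset.range r, b m x * y m ≤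
          ((1 + τtr) / (1 - τt)) * (a0 x + ∑' m, b m x * y m)) ∧
    (∀ (lam : ℝ) (v : Fin N → ℝ), v ≠ 0 → A.mulVec v = lam • Pr.mulVec v →
      (1 - τt) / (1 + τtr) ≤ lam ∧ lam ≤ (1 + τt) / (1 - τtr)) := by
  constructor
  · intro y hy
    filter_upwards [hτt, hτtr] with x hx2 hx3
    have hsF : |∑' m, b m x * y m| ≤ τt * a0 x :=
      (my_tsum_abs_le (fun m => b m x) y (hsum x) hy).trans hx2
    have hsG : |∑ m ∈ Finset.range r, b m x * y m| ≤ τtr * a0 x :=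
      (my_finsum_abs_le r (fun m => b m x) y hy).trans hx3
    obtain ⟨h1, h2, _, _⟩ := my_coeff_bounds hsF hsG hτt1 hτtr0 hτtrτ
    exact ⟨h1, h2⟩
  · intro lam v hv heig
    set F : Ω × Γ → ℝ := fun z => a0 z.1 + ∑' m, b m z.1 * Y z.2 m with hF
    set G : Ω × Γ → ℝ := fun z => a0 z.1 + ∑ m ∈ Finset.range r, b m z.1 * Y z.2 m with hG
    have hA' : ∀ t s, A t s =
        ∫ z, (p z.2 * F z) * (inner ℝ (W s z) (W t z) : ℝ) ∂(μ.prod ν) := by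
      intro t s; rw [hA t s]; simp only [mul_assoc, hF]
    have hPr' : ∀ t s, Pr t s =
        ∫ z, (p z.2 * G z) * (inner ℝ (W s z) (W t z) : ℝ) ∂(μ.prod ν) := by
      intro t s; rw [hPr t s]; simp only [mul_assoc, hG]
    have hIA' : ∀ t s, Integrable
        (fun z => (p z.2 * F z) * (inner ℝ (W s z) (W t z) : ℝ)) (μ.prod ν) := by
      intro t s; have := hIA t s; simpa only [mul_assoc, hF] using this
    have hIr' : ∀ t s, Integrable
        (fun z => (p z.2 * G z) * (inner ℝ (W s z) (W t z) : ℝ)) (μ.prod ν) := by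
      intro t s; have := hIr t s; simpa only [mul_assoc, hG] using this
    obtain ⟨hAv, hIAq⟩ := my_quad_form A (fun z => p z.2 * F z) W hA' hIA' v
    obtain ⟨hPv, hIrq⟩ := my_quad_form Pr (fun z => p z.2 * G z) W hPr' hIr' v
    have hae : ∀ᵐ z ∂(μ.prod ν),
        ((∑' m, |b m z.1|) ≤ τt * a0 z.1 ∧
          (∑ m ∈ Finset.range r, |b m z.1|) ≤ τtr * a0 z.1) ∧ ∀ m, |Y z.2 m| ≤ 1 :=
      (my_ae_fst μ ν (hτt.and hτtr)).and (my_ae_snd μ ν hY)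
    have hle : ∀ᵐ z ∂(μ.prod ν),
        ((1 - τt) / (1 + τtr)) * ((p z.2 * G z) * ‖∑ t, v t • W t z‖ ^ 2) ≤
            (p z.2 * F z) * ‖∑ t, v t • W t z‖ ^ 2 ∧
          (p z.2 * F z) * ‖∑ t, v t • W t z‖ ^ 2 ≤
            ((1 + τt) / (1 - τtr)) * ((p z.2 * G z) * ‖∑ t, v t • W t z‖ ^ 2) := by
      filter_upwards [hae] with z hz
      obtain ⟨⟨hx2, hx3⟩, hzy⟩ := hz
      have hsF : |∑' m, b m z.1 * Y z.2 m| ≤ τt * a0 z.1 :=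
        (my_tsum_abs_le (fun m => b m z.1) (Y z.2) (hsum z.1) hzy).trans hx2
      have hsG : |∑ m ∈ Finset.range r, b m z.1 * Y z.2 m| ≤ τtr * a0 z.1 :=
        (my_finsum_abs_le r (fun m => b m z.1) (Y z.2) hzy).trans hx3
      obtain ⟨_, _, h3, h4⟩ := my_coeff_bounds hsF hsG hτt1 hτtr0 hτtrτ
      have hq : (0:ℝ) ≤ p z.2 * ‖∑ t, v t • W t z‖ ^ 2 :=
        mul_nonneg (hp _) (sq_nonneg _)
      constructor
      · nlinarith [mul_le_mul_of_nonneg_right h3 hq]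
      · nlinarith [mul_le_mul_of_nonneg_right h4 hq]
    have i1 : ((1 - τt) / (1 + τtr)) * (v ⬝ᵥ Pr.mulVec v) ≤ v ⬝ᵥ A.mulVec v := by
      rw [hAv, hPv, ← integral_const_mul]
      exact integral_mono_ae (hIrq.const_mul _) hIAq (hle.mono fun z hz => hz.1)
    have i2 : v ⬝ᵥ A.mulVec v ≤ ((1 + τt) / (1 - τtr)) * (v ⬝ᵥ Pr.mulVec v) := by
      rw [hAv, hPv, ← integral_const_mul]
      exact integral_mono_ae hIAq (hIrq.const_mul _) (hle.mono fun z hz => hz.2)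
    have hQ : 0 < v ⬝ᵥ Pr.mulVec v := by
      have := hPrpd.dotProduct_mulVec_pos hv
      simpa using this
    have hlam : v ⬝ᵥ A.mulVec v = lam * (v ⬝ᵥ Pr.mulVec v) := by
      rw [heig]
      simp [dotProduct, Finset.mul_sum, mul_comm, mul_left_comm]
    rw [hlam] at i1 i2
    exact ⟨(mul_le_mul_iff_of_pos_right hQ).mp i1, (mul_le_mul_iff_of_pos_right hQ).mp i2⟩
end
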